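/- In the partition-tree counter scheme: if for each node v of a rooted tree, c_v counts the halfspaces of R containing the cell Γ_v but not containing Γ_{parent(v)}, and d_v is defined bottom-up by d_v = min over children v' of (d_{v'} + c_{v'}) with d_v at a leaf equal to the minimum, over points p in the leaf's point set, of the number of halfspaces of R crossing the leaf cell and containing p, then d_root equals the minimum depth over all points of X with respect to R. -/

import Mathlib

open Finset

noncomputable section

/-- Points of 3-space. -/
abbrev Pt3 := EuclideanSpace ℝ (Fin 3)

/-- The halfspace associated to a pair `(f, a)`: `{x | f x ≤ a}`. -/
def HS (h : (Pt3 →ₗ[ℝ] ℝ) × ℝ) : Set Pt3 := {x | h.1 x ≤ h.2}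

/-- A halfspace contains a cell if the cell is a subset of it. -/
def HContains (h : (Pt3 →ₗ[ℝ] ℝ) × ℝ) (Γ : Set Pt3) : Prop := Γ ⊆ HS h

/-- A halfspace crosses a cell if its boundary plane meets the cell. -/
def HCrosses (h : (Pt3 →ₗ[ℝ] ℝ) × ℝ) (Γ : Set Pt3) : Prop :=
  ∃ x ∈ Γ, h.1 x = h.2

/-- Adding a constant distributes over a finite infimum in `ℕ∞`. -/
lemma enat_inf_add_const {α : Type*} (s : Finset α) (f : α → ℕ∞) (a : ℕ∞) :
    s.inf f + a = s.inf fun x => f x + a := by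
  induction s using Finset.cons_induction with
  | empty => simp
  | cons x s hx ih =>
    rw [Finset.inf_cons, Finset.inf_cons, ← ih,
      min_add_add_right]

open Classical in
/-- partition-tree counter scheme.  A rooted tree with cells
`Γ v` (each contained in its parent's cell) and point sets `Xv v` (at an
internal node, the disjoint union of the children's point sets).  If
`c v` counts the halfspaces of `R` containing `Γ v` but not `Γ (parent v)`,
`d` at a leaf is the minimum over its points of the number of halfspaces of
`R` crossing the leaf cell and containing the point, and
`d v = min over children v' of (d v' + c v')` at internal nodes, then
`d root` equals the minimum depth in `R` over all points of `X = Xv root`. -/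
theorem stmt13 (V : Type) [Fintype V] (root : V) (parent : V → V)
    (Γ : V → Set Pt3) (Xv : V → Finset Pt3)
    (R : Finset ((Pt3 →ₗ[ℝ] ℝ) × ℝ)) (c : V → ℕ) (d : V → ℕ∞)
    (hroot : parent root = root)
    (hreach : ∀ v, ∃ k : ℕ, parent^[k] v = root)
    (hΓ : ∀ v, Γ v ⊆ Γ (parent v))
    (hXΓ : ∀ v, ∀ p ∈ Xv v, p ∈ Γ v)
    (hXnode : ∀ v, (Finset.univ.filter fun u => parent u = v ∧ u ≠ root) ≠ ∅ →
      Xv v = (Finset.univ.filter fun u => parent u = v ∧ u ≠ root).biUnion Xv)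
    (hXdisj : ∀ u u' : V, u ≠ u' → parent u = parent u' → u ≠ root →
      u' ≠ root → Disjoint (Xv u) (Xv u'))
    (hnoRoot : ∀ h ∈ R, ¬ HContains h (Γ root))
    (hc : ∀ v, v ≠ root → c v =
      (R.filter fun h => HContains h (Γ v) ∧ ¬ HContains h (Γ (parent v))).card)
    (hdleaf : ∀ v, (Finset.univ.filter fun u => parent u = v ∧ u ≠ root) = ∅ →
      d v = (Xv v).inf fun p =>
        ((R.filter fun h => HCrosses h (Γ v) ∧ p ∈ HS h).card : ℕ∞))
    (hdnode : ∀ v, (Finset.univ.filter fun u => parent u = v ∧ u ≠ root) ≠ ∅ →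
      d v = (Finset.univ.filter fun u => parent u = v ∧ u ≠ root).inf
        fun u => d u + (c u : ℕ∞))
    (hgen : ∀ h ∈ R, ∀ v,
      (Finset.univ.filter fun u => parent u = v ∧ u ≠ root) = ∅ →
      ¬ (HContains h (Γ v) ∧ HCrosses h (Γ v)))
    (hmeet : ∀ h ∈ R, ∀ v,
      (Finset.univ.filter fun u => parent u = v ∧ u ≠ root) = ∅ →
      ∀ p ∈ Xv v, p ∈ HS h → HContains h (Γ v) ∨ HCrosses h (Γ v)) :
    d root = (Xv root).inf fun p => ((R.filter fun h => p ∈ HS h).card : ℕ∞) := by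
  classical
  -- distance to the root
  set δ : V → ℕ := fun v => Nat.find (hreach v) with hδdef
  have hδspec : ∀ v, parent^[δ v] v = root := fun v => Nat.find_spec (hreach v)
  have hδchild : ∀ u v, parent u = v → u ≠ root → δ v < δ u := by
    intro u v hp hu
    have h1 : 0 < δ u := by
      rcases Nat.eq_zero_or_pos (δ u) with h | h
      · exact absurd (by have := hδspec u; rw [h] at this; simpa using this) hu
      · exact h
    obtain ⟨m, hm⟩ := Nat.exists_eq_succ_of_ne_zero h1.ne'
    have hmv : parent^[m] v = root := by
      have := hδspec u
      rw [hm, Function.iterate_succ_apply, hp] at this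
      exact this
    have : δ v ≤ m := Nat.find_min' _ hmv
    omega
  set N : ℕ := Finset.univ.sup δ with hNdef
  have hδle : ∀ v, δ v ≤ N := fun v => Finset.le_sup (Finset.mem_univ v)
  -- card additivity at a child
  have hcard : ∀ v u, parent u = v → ∀ p ∈ Xv u,
      (R.filter fun h => p ∈ HS h ∧ ¬ HContains h (Γ v)).card =
      (R.filter fun h => p ∈ HS h ∧ ¬ HContains h (Γ u)).card +
      (R.filter fun h => HContains h (Γ u) ∧ ¬ HContains h (Γ v)).card := by
    intro v u hp p hpX
    have hpΓ : p ∈ Γ u := hXΓ u p hpX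
    have hmono : ∀ h, HContains h (Γ v) → HContains h (Γ u) := by
      intro h hcv x hx
      have hΓu := hΓ u
      rw [hp] at hΓu
      exact hcv (hΓu hx)
    have hunion : (R.filter fun h => p ∈ HS h ∧ ¬ HContains h (Γ v)) =
        (R.filter fun h => p ∈ HS h ∧ ¬ HContains h (Γ u)) ∪
        (R.filter fun h => HContains h (Γ u) ∧ ¬ HContains h (Γ v)) := by
      ext h
      simp only [Finset.mem_filter, Finset.mem_union]
      constructor
      · rintro ⟨hR, hph, hnv⟩
        by_cases hcu : HContains h (Γ u)
        · exact Or.inr ⟨hR, hcu, hnv⟩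
        · exact Or.inl ⟨hR, hph, hcu⟩
      · rintro (⟨hR, hph, hnu⟩ | ⟨hR, hcu, hnv⟩)
        · exact ⟨hR, hph, fun hcv => hnu (hmono h hcv)⟩
        · exact ⟨hR, hcu hpΓ, hnv⟩
    rw [hunion, Finset.card_union_of_disjoint]
    rw [Finset.disjoint_left]
    intro h h1 h2
    simp only [Finset.mem_filter] at h1 h2
    exact h1.2.2 h2.2.1
  -- the generalized statement at a leaf
  have hleafcase : ∀ v, (Finset.univ.filter fun u => parent u = v ∧ u ≠ root) = ∅ →
      d v = (Xv v).inf fun p =>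
        ((R.filter fun h => p ∈ HS h ∧ ¬ HContains h (Γ v)).card : ℕ∞) := by
    intro v hv
    rw [hdleaf v hv]
    apply Finset.inf_congr rfl
    intro p hpX
    have : (R.filter fun h => HCrosses h (Γ v) ∧ p ∈ HS h) =
        (R.filter fun h => p ∈ HS h ∧ ¬ HContains h (Γ v)) := by
      apply Finset.filter_congr
      intro h hR
      constructor
      · rintro ⟨hcr, hph⟩
        exact ⟨hph, fun hcv => hgen h hR v hv ⟨hcv, hcr⟩⟩
      · rintro ⟨hph, hnc⟩
        rcases hmeet h hR v hv p hpX hph with hcv | hcr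
        · exact absurd hcv hnc
        · exact ⟨hcr, hph⟩
    rw [this]
  -- main induction
  have main : ∀ n : ℕ, ∀ v, N ≤ δ v + n →
      d v = (Xv v).inf fun p =>
        ((R.filter fun h => p ∈ HS h ∧ ¬ HContains h (Γ v)).card : ℕ∞) := by
    intro n
    induction n with
    | zero =>
      intro v hv
      have hleaf : (Finset.univ.filter fun u => parent u = v ∧ u ≠ root) = ∅ := by
        by_contra hne
        obtain ⟨u, hu⟩ := Finset.nonempty_of_ne_empty hne
        simp only [Finset.mem_filter, Finset.mem_univ, true_and] at hu
        have h1 := hδchild u v hu.1 hu.2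
        have h2 := hδle u
        omega
      exact hleafcase v hleaf
    | succ n ih =>
      intro v hv
      by_cases hleaf : (Finset.univ.filter fun u => parent u = v ∧ u ≠ root) = ∅
      · exact hleafcase v hleaf
      · rw [hdnode v hleaf, hXnode v hleaf, Finset.inf_biUnion]
        apply Finset.inf_congr rfl
        intro u hu
        simp only [Finset.mem_filter, Finset.mem_univ, true_and] at hu
        have hδu := hδchild u v hu.1 hu.2
        have ihu := ih u (by omega)
        rw [ihu, hc u hu.2, hu.1, enat_inf_add_const]
        apply Finset.inf_congr rfl
        intro p hpX
        have := hcard v u hu.1 p hpX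
        push_cast
        exact_mod_cast congrArg (Nat.cast : ℕ → ℕ∞) this.symm
  -- conclude at the root
  have hr := main N root (by omega)
  rw [hr]
  apply Finset.inf_congr rfl
  intro p hp
  have : (R.filter fun h => p ∈ HS h ∧ ¬ HContains h (Γ root)) =
      R.filter fun h => p ∈ HS h := by
    apply Finset.filter_congr
    intro h hR
    exact ⟨fun ⟨a, _⟩ => a, fun a => ⟨a, hnoRoot h hR⟩⟩
  rw [this]

end
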